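/- Let a > 1, let k be a positive integer, let Q(s) = s / (a - (a-1)s^k)^{1/k} be the Harris(a,k) PGF, and let c ∈ (0,1). Let F : (0,∞) → ℝ satisfy 0 < 1 - F(x) ≤ 1 for all x > 0, set R = 1 - F and ψ(x) = R(x)^{-k} - 1 (so that F(x) = 1 - (1 + ψ(x))^{-1/k}). Then Q(R(cx)) = R(x) for all x > 0 if and only if ψ(cx) = (1/a)·ψ(x) for all x > 0; that is, F is Harris(a,k)-min stable with constant c if and only if F is generalized semi-Pareto(p,α,β) with p = 1/a = c^α and β = 1/k. -/

import Mathlib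

/-- F is Harris(a,k)-min stable with constant c iff F is generalized
semi-Pareto, i.e. iff ψ(cx) = (1/a)·ψ(x) for all x > 0, where
ψ(x) = R(x)^{-k} - 1 and R = 1 - F. -/
theorem harris_min_stable_iff_genSemiPareto
    (a : ℝ) (ha : 1 < a) (k : ℕ) (hk : 0 < k) (c : ℝ) (hc : c ∈ Set.Ioo (0:ℝ) 1)
    (Q F R ψ : ℝ → ℝ)
    (hQ : ∀ s : ℝ, Q s = s / (a - (a - 1) * s ^ k) ^ ((1:ℝ) / k))
    (hF : ∀ x : ℝ, 0 < x → 0 < 1 - F x ∧ 1 - F x ≤ 1)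
    (hR : ∀ x : ℝ, 0 < x → R x = 1 - F x)
    (hψ : ∀ x : ℝ, 0 < x → ψ x = (R x) ^ (-(k:ℝ)) - 1) :
    (∀ x : ℝ, 0 < x → Q (R (c * x)) = R x) ↔
      (∀ x : ℝ, 0 < x → ψ (c * x) = (1 / a) * ψ x) := by
  have hk' : (k : ℝ) ≠ 0 := Nat.cast_ne_zero.mpr hk.ne'
  constructor
  · intro h x hx
    have hcx : 0 < c * x := mul_pos hc.1 hx
    obtain ⟨hR1, hR2⟩ := hF x hx
    obtain ⟨hR1', hR2'⟩ := hF (c * x) hcx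
    rw [← hR x hx] at hR1 hR2
    rw [← hR (c * x) hcx] at hR1' hR2'
    set rx := R x with hrx
    set rcx := R (c * x) with hrcx
    set D : ℝ := a - (a - 1) * rcx ^ k with hD
    have hDge : 1 ≤ D := by
      have hpow : rcx ^ k ≤ 1 := pow_le_one₀ hR1'.le hR2'
      nlinarith
    have hDpos : 0 < D := lt_of_lt_of_le one_pos hDge
    have hQx := h x hx
    rw [hQ] at hQx
    have hrtpos : 0 < D ^ ((1:ℝ)/k) := Real.rpow_pos_of_pos hDpos _
    have hrcx_eq : rcx = rx * D ^ ((1:ℝ)/k) := by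
      have hQx' : rcx / D ^ ((1:ℝ)/k) = rx := hQx
      rw [div_eq_iff hrtpos.ne'] at hQx'
      linarith [hQx']
    have hpow : rcx ^ k = rx ^ k * D := by
      rw [hrcx_eq, mul_pow, ← Real.rpow_natCast (D ^ ((1:ℝ)/k)) k,
        ← Real.rpow_mul hDpos.le, one_div_mul_cancel hk', Real.rpow_one]
    have hu : (0:ℝ) < rx ^ k := pow_pos hR1 k
    have hv : (0:ℝ) < rcx ^ k := pow_pos hR1' k
    rw [hψ x hx, hψ (c * x) hcx, ← hrx, ← hrcx,
      Real.rpow_neg hR1.le, Real.rpow_neg hR1'.le,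
      Real.rpow_natCast, Real.rpow_natCast]
    have key : rcx ^ k = rx ^ k * (a - (a - 1) * rcx ^ k) := by rw [← hD]; exact hpow
    have ha0 : (0:ℝ) < a := lt_trans one_pos ha
    field_simp
    nlinarith [key, hu, hv]
  · intro h x hx
    have hcx : 0 < c * x := mul_pos hc.1 hx
    obtain ⟨hR1, hR2⟩ := hF x hx
    obtain ⟨hR1', hR2'⟩ := hF (c * x) hcx
    rw [← hR x hx] at hR1 hR2
    rw [← hR (c * x) hcx] at hR1' hR2'
    set rx := R x with hrx
    set rcx := R (c * x) with hrcx
    have hψx := h x hx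
    rw [hψ x hx, hψ (c * x) hcx, ← hrx, ← hrcx,
      Real.rpow_neg hR1.le, Real.rpow_neg hR1'.le,
      Real.rpow_natCast, Real.rpow_natCast] at hψx
    have hu : (0:ℝ) < rx ^ k := pow_pos hR1 k
    have hv : (0:ℝ) < rcx ^ k := pow_pos hR1' k
    have ha0 : (0:ℝ) < a := lt_trans one_pos ha
    set D : ℝ := a - (a - 1) * rcx ^ k with hD
    have hDge : 1 ≤ D := by
      have hpow : rcx ^ k ≤ 1 := pow_le_one₀ hR1'.le hR2'
      nlinarith
    have hDpos : 0 < D := lt_of_lt_of_le one_pos hDge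
    have key : rcx ^ k = rx ^ k * D := by
      rw [hD]
      field_simp at hψx
      nlinarith [hψx]
    have hrtpos : 0 < D ^ ((1:ℝ)/k) := Real.rpow_pos_of_pos hDpos _
    have hrcx_eq : rcx = rx * D ^ ((1:ℝ)/k) := by
      have h1 : rcx ^ k = (rx * D ^ ((1:ℝ)/k)) ^ k := by
        rw [mul_pow, ← Real.rpow_natCast (D ^ ((1:ℝ)/k)) k,
          ← Real.rpow_mul hDpos.le, one_div_mul_cancel hk', Real.rpow_one, key]
      exact (pow_left_inj₀ hR1'.le (mul_pos hR1 hrtpos).le hk.ne').mp h1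
    rw [hQ]
    rw [hrcx_eq]
    rw [show a - (a - 1) * (rx * D ^ ((1:ℝ)/k)) ^ k = D by
      rw [← hrcx_eq, hD]]
    exact mul_div_cancel_right₀ rx hrtpos.ne'
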